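/- Let T > 0, A ≥ 0, C ≥ 0, c > 0, δ > 0, and let M₀ > 0 satisfy A·h − c·h^(1+δ) + C ≤ 0 for all h ≥ M₀. Let g : (0,T] → ℝ be a differentiable nonnegative function with g(t) → 0 as t → 0⁺, satisfying g′(t) ≤ A·(g(t)/t) − c·(g(t)/t)^(1+δ) + C for all t ∈ (0,T]. Then g(t) ≤ M₀·t for all t ∈ (0,T]. -/
import Mathlib


theorem smoothing_rate (T A C c δ M₀ : ℝ) (hT : 0 < T) (hA : 0 ≤ A) (hC : 0 ≤ C)
    (hc : 0 < c) (hδ : 0 < δ) (hM₀ : 0 < M₀)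
    (habs : ∀ h : ℝ, M₀ ≤ h → A * h - c * h ^ (1 + δ) + C ≤ 0)
    (g g' : ℝ → ℝ)
    (hderiv : ∀ t ∈ Set.Ioc (0 : ℝ) T, HasDerivAt g (g' t) t)
    (hnonneg : ∀ t ∈ Set.Ioc (0 : ℝ) T, 0 ≤ g t)
    (hlim : Filter.Tendsto g (nhdsWithin 0 (Set.Ioi 0)) (nhds 0))
    (hineq : ∀ t ∈ Set.Ioc (0 : ℝ) T,
      g' t ≤ A * (g t / t) - c * (g t / t) ^ (1 + δ) + C) :
    ∀ t ∈ Set.Ioc (0 : ℝ) T, g t ≤ M₀ * t := by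
  intro t₀ ht₀
  by_contra hcon
  push_neg at hcon
  set K := M₀ * t₀ with hKdef
  have hKpos : 0 < K := mul_pos hM₀ ht₀.1
  -- Claim: g > K on (0, t₀]
  have claim : ∀ a ∈ Set.Ioc (0 : ℝ) t₀, K < g a := by
    by_contra hcl
    push_neg at hcl
    obtain ⟨a, ha, hga⟩ := hcl
    have haT : a ∈ Set.Ioc (0 : ℝ) T := ⟨ha.1, ha.2.trans ht₀.2⟩
    have halt : a < t₀ := lt_of_le_of_ne ha.2 (by rintro rfl; exact absurd hga (not_le.2 hcon))
    set S : Set ℝ := {x ∈ Set.Icc a t₀ | g x ≤ K} with hSdef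
    have hSne : S.Nonempty := ⟨a, ⟨le_refl a, ha.2⟩, hga⟩
    have hSbdd : BddAbove S := ⟨t₀, fun x hx => hx.1.2⟩
    set s := sSup S with hsdef
    have has : a ≤ s := le_csSup hSbdd ⟨⟨le_refl a, ha.2⟩, hga⟩
    have hst₀ : s ≤ t₀ := csSup_le hSne fun x hx => hx.1.2
    have hsT : s ∈ Set.Ioc (0 : ℝ) T := ⟨ha.1.trans_le has, hst₀.trans ht₀.2⟩
    -- g s ≤ K via closure
    have hs_cl : s ∈ closure S := csSup_mem_closure hSne hSbdd
    haveI : (nhdsWithin s S).NeBot := mem_closure_iff_nhdsWithin_neBot.1 hs_cl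
    have hgs : g s ≤ K := by
      have cw : Filter.Tendsto g (nhdsWithin s S) (nhds (g s)) :=
        ((hderiv s hsT).continuousAt).continuousWithinAt
      exact le_of_tendsto cw (eventually_mem_nhdsWithin.mono fun x hx => hx.2)
    have hslt : s < t₀ := lt_of_le_of_ne hst₀ (by intro heq; rw [heq] at hgs; exact absurd hgs (not_le.2 hcon))
    -- on (s, t₀], g > K
    have hgt : ∀ x ∈ Set.Ioc s t₀, K < g x := by
      intro x hx
      by_contra hgx
      push_neg at hgx
      have hxS : x ∈ S := ⟨⟨has.trans hx.1.le, hx.2⟩, hgx⟩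
      exact absurd (le_csSup hSbdd hxS) (not_le.2 hx.1)
    -- antitone on [s, t₀]
    have hsub : Set.Icc s t₀ ⊆ Set.Ioc (0 : ℝ) T := fun x hx =>
      ⟨hsT.1.trans_le hx.1, hx.2.trans ht₀.2⟩
    have hcont : ContinuousOn g (Set.Icc s t₀) := fun x hx =>
      ((hderiv x (hsub hx)).continuousAt).continuousWithinAt
    have hint : interior (Set.Icc s t₀) = Set.Ioo s t₀ := interior_Icc
    have hdiff : DifferentiableOn ℝ g (interior (Set.Icc s t₀)) := by
      rw [hint]
      exact fun x hx => ((hderiv x (hsub (Set.Ioo_subset_Icc_self hx))).differentiableAt).differentiableWithinAt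
    have hdnp : ∀ x ∈ interior (Set.Icc s t₀), deriv g x ≤ 0 := by
      rw [hint]
      intro x hx
      have hxT : x ∈ Set.Ioc (0 : ℝ) T := hsub (Set.Ioo_subset_Icc_self hx)
      rw [(hderiv x hxT).deriv]
      have hKx : K < g x := hgt x ⟨hx.1, hx.2.le⟩
      have hM : M₀ ≤ g x / x := by
        rw [le_div_iff₀ hxT.1]
        calc M₀ * x ≤ M₀ * t₀ := by nlinarith [hx.2]
          _ ≤ g x := hKx.le
      exact (hineq x hxT).trans (habs _ hM)
    have hanti : AntitoneOn g (Set.Icc s t₀) :=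
      antitoneOn_of_deriv_nonpos (convex_Icc s t₀) hcont hdiff hdnp
    have : g t₀ ≤ g s := hanti ⟨le_refl s, hslt.le⟩ ⟨hslt.le, le_refl t₀⟩ hslt.le
    exact absurd (this.trans hgs) (not_le.2 hcon)
  -- contradiction with the limit
  have h1 : ∀ᶠ x in nhdsWithin 0 (Set.Ioi 0), g x < K :=
    hlim.eventually (gt_mem_nhds hKpos)
  have h2 : Set.Ioc (0 : ℝ) t₀ ∈ nhdsWithin 0 (Set.Ioi 0) :=
    Ioc_mem_nhdsGT_of_mem ⟨le_refl 0, ht₀.1⟩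
  obtain ⟨x, hx1, hx2⟩ := (h1.and (Filter.eventually_of_mem h2 fun x hx => hx)).exists
  exact absurd (claim x hx2) (not_lt.2 hx1.le)
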